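/- Let Γ be a finite group acting on a k-algebra R, where k is a field of characteristic zero. Let 𝒫 be a full abelian subcategory of finite-dimensional R-modules and 𝒟 a full abelian subcategory of finite-dimensional (R ⋊ Γ)-modules such that the restriction to R of every object of 𝒟 lies in 𝒫. If 𝒫 is semisimple (every object is a direct sum of simple objects), then 𝒟 is semisimple. -/

import Mathlib

universe u

/-- The skew group ring `R ⋊ Γ`, presented as a `k`-algebra `B` with an algebra embedding of
`R`, a group homomorphism from `Γ` to the units of `B`, the skew commutation relation, and
freeness `R ⊗ kΓ ≃ B`. -/
structure SkewGroupRing (k R Γ B : Type*) [Field k] [Ring R] [Algebra k R]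
    [Group Γ] [Ring B] [Algebra k B] (φ : Γ →* (R ≃ₐ[k] R)) where
  ι : R →ₐ[k] B
  u : Γ →* Bˣ
  comm : ∀ (γ : Γ) (r : R), (u γ : B) * ι r = ι (φ γ r) * (u γ : B)
  bij : Function.Bijective fun f : Γ →₀ R => f.sum fun γ r => ι r * (u γ : B)

/-- Let `Γ` be a finite group acting on a `k`-algebra `R`, `k` of
characteristic zero.  Let `𝒫` be a full (abelian) subcategory of finite-dimensional
`R`-modules, and `𝒟` a full (abelian) subcategory of finite-dimensional `(R ⋊ Γ)`-modules,
such that the restriction to `R` of every object of `𝒟` lies in `𝒫`.  If `𝒫` is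
semisimple (every short exact sequence in `𝒫` splits), then `𝒟` is semisimple. -/
theorem skew_group_ring_semisimple_of_semisimple
    {k R Γ B : Type u} [Field k] [CharZero k] [Ring R] [Algebra k R]
    [Group Γ] [Fintype Γ] [Ring B] [Algebra k B]
    (φ : Γ →* (R ≃ₐ[k] R)) (S : SkewGroupRing k R Γ B φ)
    -- the subcategory 𝒫 of fin.-dim. R-modules, and 𝒟 of fin.-dim. (R ⋊ Γ)-modules
    (P : ∀ (N : Type u) [AddCommGroup N] [Module k N] [Module R N], Prop)
    (D : ∀ (M : Type u) [AddCommGroup M] [Module k M] [Module B M], Prop)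
    (hPfd : ∀ (N : Type u) [AddCommGroup N] [Module k N] [Module R N],
      P N → FiniteDimensional k N)
    (hDfd : ∀ (M : Type u) [AddCommGroup M] [Module k M] [Module B M],
      D M → FiniteDimensional k M)
    -- restriction of every object of 𝒟 lies in 𝒫
    (hres : ∀ (M : Type u) [AddCommGroup M] [Module k M] [Module B M],
      D M → (letI : Module R M := Module.compHom M S.ι.toRingHom; P M))
    -- 𝒫 is semisimple: every short exact sequence in 𝒫 splits
    (hP : ∀ (N₁ N₂ N₃ : Type u)
      [AddCommGroup N₁] [Module k N₁] [Module R N₁]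
      [AddCommGroup N₂] [Module k N₂] [Module R N₂]
      [AddCommGroup N₃] [Module k N₃] [Module R N₃],
      P N₁ → P N₂ → P N₃ →
      ∀ (f : N₁ →ₗ[R] N₂) (g : N₂ →ₗ[R] N₃), Function.Injective f →
        Function.Surjective g → LinearMap.range f = LinearMap.ker g →
        ∃ s : N₃ →ₗ[R] N₂, g ∘ₗ s = LinearMap.id) :
    -- then 𝒟 is semisimple: every short exact sequence in 𝒟 splits
    ∀ (M₁ M₂ M₃ : Type u)
      [AddCommGroup M₁] [Module k M₁] [Module B M₁]
      [AddCommGroup M₂] [Module k M₂] [Module B M₂]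
      [AddCommGroup M₃] [Module k M₃] [Module B M₃],
      D M₁ → D M₂ → D M₃ →
      ∀ (f : M₁ →ₗ[B] M₂) (g : M₂ →ₗ[B] M₃), Function.Injective f →
        Function.Surjective g → LinearMap.range f = LinearMap.ker g →
        ∃ s : M₃ →ₗ[B] M₂, g ∘ₗ s = LinearMap.id := by
  intro M₁ M₂ M₃ _ _ _ _ _ _ _ _ _ hD₁ hD₂ hD₃ f g hfi hgs hfg
  letI iR1 : Module R M₁ := Module.compHom M₁ S.ι.toRingHom
  letI iR2 : Module R M₂ := Module.compHom M₂ S.ι.toRingHom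
  letI iR3 : Module R M₃ := Module.compHom M₃ S.ι.toRingHom
  -- the restricted maps
  let fR : M₁ →ₗ[R] M₂ :=
    { toFun := f, map_add' := f.map_add,
      map_smul' := fun r x => f.map_smul (S.ι r) x }
  let gR : M₂ →ₗ[R] M₃ :=
    { toFun := g, map_add' := g.map_add,
      map_smul' := fun r x => g.map_smul (S.ι r) x }
  have hrk : LinearMap.range fR = LinearMap.ker gR := by
    ext x
    rw [LinearMap.mem_range, LinearMap.mem_ker]
    constructor
    · rintro ⟨y, rfl⟩
      exact (show f y ∈ LinearMap.ker g from hfg ▸ LinearMap.mem_range_self f y)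
    · intro hx
      obtain ⟨y, hy⟩ := (show x ∈ LinearMap.range f from hfg.symm ▸ (show x ∈ LinearMap.ker g from hx))
      exact ⟨y, hy⟩
  obtain ⟨s₀, hs₀⟩ := hP M₁ M₂ M₃ (hres M₁ hD₁) (hres M₂ hD₂) (hres M₃ hD₃) fR gR hfi hgs hrk
  have hgs₀ : ∀ x : M₃, g (s₀ x) = x := fun x => LinearMap.congr_fun hs₀ x
  -- the averaging
  set n := Fintype.card Γ with hndef
  have hn : (n : k) ≠ 0 := Nat.cast_ne_zero.mpr Fintype.card_ne_zero
  set c : B := algebraMap k B ((n : k)⁻¹) with hcdef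
  have hcB : ∀ b : B, c * b = b * c := fun b => Algebra.commutes _ b
  have hc1 : c * (n : B) = 1 := by
    rw [hcdef, ← map_natCast (algebraMap k B) n, ← map_mul, inv_mul_cancel₀ hn, map_one]
  set T : M₃ → M₂ := fun m => ∑ γ : Γ, (S.u γ : B) • s₀ ((↑(S.u γ)⁻¹ : B) • m) with hTdef
  have Tadd : ∀ x y : M₃, T (x + y) = T x + T y := by
    intro x y
    simp only [hTdef, smul_add, map_add, Finset.sum_add_distrib]
  let Th : M₃ →+ M₂ := { toFun := T, map_zero' := by simp [hTdef], map_add' := Tadd }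
  have hterm : ∀ (r : R) (δ : Γ) (m : M₃),
      T ((S.ι r * (S.u δ : B)) • m) = (S.ι r * (S.u δ : B)) • T m := by
    intro r δ m
    have hphi : ∀ γ : Γ, φ γ (φ γ⁻¹ r) = r := by
      intro γ
      rw [map_inv]
      exact (φ γ).apply_symm_apply r
    have hinv : ∀ γ : Γ, (↑(S.u γ)⁻¹ : B) * S.ι r = S.ι (φ γ⁻¹ r) * (↑(S.u γ)⁻¹ : B) := by
      intro γ
      have h := S.comm γ⁻¹ r
      rwa [map_inv] at h
    have step : ∀ γ : Γ, (S.u γ : B) • s₀ ((↑(S.u γ)⁻¹ : B) • (S.ι r * (S.u δ : B)) • m)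
        = S.ι r • ((S.u γ : B) • s₀ (((↑(S.u γ)⁻¹ : B) * (S.u δ : B)) • m)) := by
      intro γ
      rw [smul_smul, ← mul_assoc, hinv γ, mul_assoc, mul_smul (S.ι (φ γ⁻¹ r))]
      rw [show s₀ (S.ι (φ γ⁻¹ r) • ((↑(S.u γ)⁻¹ * (S.u δ : B)) • m))
          = S.ι (φ γ⁻¹ r) • s₀ ((↑(S.u γ)⁻¹ * (S.u δ : B)) • m) from
        s₀.map_smul (φ γ⁻¹ r) _]
      rw [smul_smul (S.u γ : B), S.comm γ (φ γ⁻¹ r), hphi γ, mul_smul]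
    have reidx : (∑ γ : Γ, (S.u γ : B) • s₀ (((↑(S.u γ)⁻¹ : B) * (S.u δ : B)) • m))
        = (S.u δ : B) • ∑ γ : Γ, (S.u γ : B) • s₀ ((↑(S.u γ)⁻¹ : B) • m) := by
      have hG : ∀ γ : Γ, (S.u (δ * γ) : B) • s₀ (((↑(S.u (δ * γ))⁻¹ : B) * (S.u δ : B)) • m)
          = (S.u δ : B) • ((S.u γ : B) • s₀ ((↑(S.u γ)⁻¹ : B) • m)) := by
        intro γ
        have h2 : ((↑(S.u (δ * γ))⁻¹ : B)) * (S.u δ : B) = (↑(S.u γ)⁻¹ : B) := by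
          rw [map_mul, mul_inv_rev, Units.val_mul, mul_assoc, Units.inv_mul, mul_one]
        rw [h2, map_mul, Units.val_mul, mul_smul]
      calc (∑ γ : Γ, (S.u γ : B) • s₀ (((↑(S.u γ)⁻¹ : B) * (S.u δ : B)) • m))
          = ∑ γ : Γ, (S.u (δ * γ) : B) • s₀ (((↑(S.u (δ * γ))⁻¹ : B) * (S.u δ : B)) • m) :=
            by
            rw [← Equiv.sum_comp (Equiv.mulLeft δ)
              (fun γ => (S.u γ : B) • s₀ (((↑(S.u γ)⁻¹ : B) * (S.u δ : B)) • m))]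
            simp only [Equiv.coe_mulLeft]
        _ = ∑ γ : Γ, (S.u δ : B) • ((S.u γ : B) • s₀ ((↑(S.u γ)⁻¹ : B) • m)) :=
            Finset.sum_congr rfl fun γ _ => hG γ
        _ = (S.u δ : B) • ∑ γ : Γ, (S.u γ : B) • s₀ ((↑(S.u γ)⁻¹ : B) • m) :=
            (Finset.smul_sum).symm
    simp only [hTdef]
    rw [Finset.sum_congr rfl fun γ _ => step γ, ← Finset.smul_sum, reidx, smul_smul, mul_smul]
  have key : ∀ (b : B) (m : M₃), T (b • m) = b • T m := by
    intro b m
    obtain ⟨fb, rfl⟩ := S.bij.2 b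
    simp only [Finsupp.sum]
    rw [Finset.sum_smul]
    rw [show T (∑ γ ∈ fb.support, (S.ι (fb γ) * (S.u γ : B)) • m)
        = ∑ γ ∈ fb.support, T ((S.ι (fb γ) * (S.u γ : B)) • m) from
      map_sum Th (fun γ => (S.ι (fb γ) * (S.u γ : B)) • m) fb.support]
    rw [Finset.sum_congr rfl fun γ _ => hterm (fb γ) γ m, ← Finset.sum_smul]
  refine ⟨{ toFun := fun m => c • T m,
            map_add' := fun x y => by rw [Tadd, smul_add],
            map_smul' := fun b m => by
              dsimp only [RingHom.id_apply]
              rw [key, smul_smul, smul_smul, ← hcB b] }, ?_⟩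
  ext m
  show g (c • T m) = m
  rw [map_smul]
  have hGT : g (T m) = (n : B) • m := by
    rw [hTdef, map_sum]
    have h1 : ∀ γ : Γ, g ((S.u γ : B) • s₀ ((↑(S.u γ)⁻¹ : B) • m)) = m := by
      intro γ
      rw [map_smul, hgs₀, smul_smul, Units.mul_inv, one_smul]
    rw [Finset.sum_congr rfl fun γ _ => h1 γ, Finset.sum_const, Finset.card_univ]
    exact (Nat.cast_smul_eq_nsmul B n m).symm
  rw [hGT, smul_smul, hc1, one_smul]
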